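/- Let κ > 0 and let x̂ ∈ (0, 1) be the unique root in (0,1) of u(x) = -κx³ - 3x + 2. Then the function f(x) = x²(1-x)/(1 + κx²) is strictly increasing on (0, x̂] and strictly decreasing on [x̂, 1); in particular f attains its unique maximum on (0, 1) at x = x̂. -/

import Mathlib

lemma stmt16_deriv (κ : ℝ) (hκ : 0 < κ) (x : ℝ) :
    HasDerivAt (fun x : ℝ => x ^ 2 * (1 - x) / (1 + κ * x ^ 2))
      (x * (2 - 3 * x - κ * x ^ 3) / (1 + κ * x ^ 2) ^ 2) x := by
  have hd : (1 + κ * x ^ 2) ≠ 0 := by positivity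
  have h1 : HasDerivAt (fun x : ℝ => x ^ 2 * (1 - x)) (2 * x - 3 * x ^ 2) x := by
    have := (hasDerivAt_pow 2 x).mul ((hasDerivAt_const x (1 : ℝ)).sub (hasDerivAt_id x))
    exact this.congr_deriv (by simp; ring)
  have h2 : HasDerivAt (fun x : ℝ => 1 + κ * x ^ 2) (2 * κ * x) x := by
    have := (hasDerivAt_const x (1 : ℝ)).add ((hasDerivAt_const x κ).mul (hasDerivAt_pow 2 x))
    exact this.congr_deriv (by simp; ring)
  have := h1.div h2 hd
  exact this.congr_deriv (by rw [div_left_inj' (pow_ne_zero 2 hd)]; ring)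

/-- With `x̂ ∈ (0,1)` the unique root of `-κx³ - 3x + 2` in `(0,1)`,
`f(x) = x²(1-x)/(1 + κx²)` is strictly increasing on `(0, x̂]`, strictly
decreasing on `[x̂, 1)`, and attains its unique maximum on `(0,1)` at `x̂`. -/
theorem stmt_16 (κ xh : ℝ) (hκ : 0 < κ) (hmem : xh ∈ Set.Ioo (0 : ℝ) 1)
    (hroot : -κ * xh ^ 3 - 3 * xh + 2 = 0)
    (huniq : ∀ x ∈ Set.Ioo (0 : ℝ) 1, -κ * x ^ 3 - 3 * x + 2 = 0 → x = xh) :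
    StrictMonoOn (fun x : ℝ => x ^ 2 * (1 - x) / (1 + κ * x ^ 2)) (Set.Ioc 0 xh) ∧
    StrictAntiOn (fun x : ℝ => x ^ 2 * (1 - x) / (1 + κ * x ^ 2)) (Set.Ico xh 1) ∧
    ∀ x ∈ Set.Ioo (0 : ℝ) 1, x ≠ xh →
      x ^ 2 * (1 - x) / (1 + κ * x ^ 2) < xh ^ 2 * (1 - xh) / (1 + κ * xh ^ 2) := by
  obtain ⟨hx0, hx1⟩ := hmem
  have hmono : StrictMonoOn (fun x : ℝ => x ^ 2 * (1 - x) / (1 + κ * x ^ 2))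
      (Set.Ioc 0 xh) := by
    apply strictMonoOn_of_deriv_pos (convex_Ioc 0 xh)
    · exact fun x _ =>
        (stmt16_deriv κ hκ x).differentiableAt.continuousAt.continuousWithinAt
    · intro x hx
      rw [interior_Ioc] at hx
      obtain ⟨h1, h2⟩ := hx
      rw [(stmt16_deriv κ hκ x).deriv]
      apply div_pos
      · have h3 : 0 < 2 - 3 * x - κ * x ^ 3 := by
          nlinarith [mul_pos hκ (mul_pos h1 h1), mul_pos hκ (mul_pos hx0 hx0),
            mul_pos hκ (mul_pos h1 hx0)]
        positivity
      · positivity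
  have hanti : StrictAntiOn (fun x : ℝ => x ^ 2 * (1 - x) / (1 + κ * x ^ 2))
      (Set.Ico xh 1) := by
    apply strictAntiOn_of_deriv_neg (convex_Ico xh 1)
    · exact fun x _ =>
        (stmt16_deriv κ hκ x).differentiableAt.continuousAt.continuousWithinAt
    · intro x hx
      rw [interior_Ico] at hx
      obtain ⟨h1, h2⟩ := hx
      have hxpos : 0 < x := hx0.trans h1
      rw [(stmt16_deriv κ hκ x).deriv]
      apply div_neg_of_neg_of_pos
      · have h3 : 2 - 3 * x - κ * x ^ 3 < 0 := by
          nlinarith [mul_pos hκ (mul_pos hxpos hxpos), mul_pos hκ (mul_pos hx0 hx0),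
            mul_pos hκ (mul_pos hxpos hx0)]
        nlinarith
      · positivity
  refine ⟨hmono, hanti, fun x hx hne => ?_⟩
  rcases lt_or_gt_of_ne hne with h | h
  · exact hmono ⟨hx.1, h.le⟩ ⟨hx0, le_refl xh⟩ h
  · exact hanti ⟨le_refl xh, hx1⟩ ⟨h.le, hx.2⟩ h
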